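/- Let φ_a denote the centered normal density with variance a > 0 and let I, J > 0. Then ∫_0^∞ z² (∫_0^∞ φ_I(x) φ_J(z−x) dx) dz = (I+J)/2 − ((I+J)/(2π))·arctan(√(J/I)) + √(IJ)/(2π). -/

import Mathlib

open MeasureTheory Real Set Filter

-- the standard Gaussian kernel
noncomputable def gk (s : ℝ) : ℝ := Real.exp (-s ^ 2 / 2)

lemma gk_eq (s : ℝ) : gk s = Real.exp (-(1/2 : ℝ) * s ^ 2) := by
  unfold gk; ring_nf

lemma gk_int : Integrable gk := by
  have := integrable_exp_neg_mul_sq (by norm_num : (0:ℝ) < 1/2)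
  exact this.congr (by filter_upwards with s; rw [gk_eq])

lemma gk_cont : Continuous gk := by
  unfold gk; fun_prop

noncomputable def Q (a : ℝ) : ℝ := ∫ s in Set.Ioi (-a), gk s

lemma Q_eq (a : ℝ) :
    Q a = (∫ s in Ioi (0:ℝ), gk s) - ∫ s in (0:ℝ)..(-a), gk s := by
  have key : ∀ t : ℝ, (∫ s in Ioi t, gk s) = (∫ s, gk s) - ∫ s in Iic t, gk s := by
    intro t
    have := integral_add_compl (measurableSet_Iic (a := t)) gk_int
    rw [compl_Iic] at this
    linarith
  have h2 : (∫ s in (0:ℝ)..(-a), gk s) =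
      (∫ s in Iic (-a), gk s) - ∫ s in Iic (0:ℝ), gk s :=
    (intervalIntegral.integral_Iic_sub_Iic gk_int.integrableOn gk_int.integrableOn).symm
  unfold Q
  rw [key, key, h2]; ring

lemma hasDerivAt_Q (a : ℝ) : HasDerivAt Q (gk a) a := by
  have h1 : HasDerivAt (fun t : ℝ => ∫ s in (0:ℝ)..t, gk s) (gk (-a)) (-a) :=
    intervalIntegral.integral_hasDerivAt_right gk_int.intervalIntegrable
      gk_cont.aestronglyMeasurable.stronglyMeasurableAtFilter gk_cont.continuousAt
  have h2 : HasDerivAt (fun a : ℝ => ∫ s in (0:ℝ)..(-a), gk s) (-(gk (-a))) a := by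
    simpa [Function.comp_def] using h1.comp a (hasDerivAt_neg a)
  have h3 : HasDerivAt (fun a : ℝ =>
      (∫ s in Ioi (0:ℝ), gk s) - ∫ s in (0:ℝ)..(-a), gk s) (gk (-a)) a := by
    simpa [Pi.sub_def] using (hasDerivAt_const a _).sub h2
  have : gk (-a) = gk a := by unfold gk; ring_nf
  rw [this] at h3
  exact h3.congr_of_eventuallyEq (by filter_upwards with t; rw [Q_eq])

lemma Q_cont : Continuous Q := by
  have : ∀ a, ContinuousAt Q a := fun a => (hasDerivAt_Q a).continuousAt
  exact continuous_iff_continuousAt.mpr this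

lemma Q_nonneg (a : ℝ) : 0 ≤ Q a :=
  setIntegral_nonneg measurableSet_Ioi (fun s _ => (Real.exp_pos _).le)

lemma Q_le (a : ℝ) : Q a ≤ Real.sqrt (2 * π) := by
  have h1 : Q a ≤ ∫ s, gk s := by
    apply setIntegral_le_integral gk_int
    filter_upwards with s using (Real.exp_pos _).le
  have h2 : (∫ s, gk s) = Real.sqrt (2 * π) := by
    have := integral_gaussian (1/2 : ℝ)
    rw [show π / (1/2 : ℝ) = 2 * π by ring] at this
    rw [← this]
    exact integral_congr_ae (by filter_upwards with s; rw [gk_eq])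
  linarith

lemma tendsto_pow_mul_exp_neg_mul_sq {b : ℝ} (hb : 0 < b) (n : ℕ) :
    Tendsto (fun x : ℝ => x ^ n * Real.exp (-b * x ^ 2)) atTop (nhds 0) := by
  have h0 : Tendsto (fun x : ℝ => Real.exp (-(1/2) * x)) atTop (nhds 0) := by
    have : Tendsto (fun x : ℝ => -(1/2) * x) atTop atBot :=
      (tendsto_neg_atBot_iff (α := ℝ)).mpr
        ((tendsto_const_mul_atTop_of_pos (by norm_num : (0:ℝ) < 1/2)).mpr tendsto_id)
      |>.congr (by intro x; simp)
    exact Real.tendsto_exp_atBot.comp this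
  have h := (rpow_mul_exp_neg_mul_sq_isLittleO_exp_neg hb (n : ℝ)).trans_tendsto h0
  apply h.congr'
  filter_upwards [eventually_gt_atTop (0:ℝ)] with x hx
  rw [Real.rpow_natCast]

lemma integrableOn_pow_mul_exp_neg_mul_sq {b : ℝ} (hb : 0 < b) (n : ℕ) :
    IntegrableOn (fun x : ℝ => x ^ n * Real.exp (-b * x ^ 2)) (Ioi 0) := by
  have := integrableOn_rpow_mul_exp_neg_mul_sq hb (s := (n : ℝ)) (lt_of_lt_of_le neg_one_lt_zero (Nat.cast_nonneg n))
  apply this.congr_fun ?_ measurableSet_Ioi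
  intro x hx
  simp only [Real.rpow_natCast]

lemma moment2 {b : ℝ} (hb : 0 < b) :
    (∫ x in Ioi (0:ℝ), x ^ 2 * Real.exp (-b * x ^ 2)) = Real.sqrt (π / b) / (4 * b) := by
  have hderiv : ∀ x ∈ Ici (0:ℝ), HasDerivAt
      (fun x : ℝ => (-(1/(2*b)) * x) * Real.exp (-b * x ^ 2))
      (x ^ 2 * Real.exp (-b * x ^ 2) - (1/(2*b)) * Real.exp (-b * x ^ 2)) x := by
    intro x _
    have h1 : HasDerivAt (fun x : ℝ => (-(1/(2*b)) * x)) (-(1/(2*b))) x := by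
      simpa using (hasDerivAt_id x).const_mul (-(1/(2*b)))
    have h2 : HasDerivAt (fun x : ℝ => Real.exp (-b * x ^ 2))
        (Real.exp (-b * x ^ 2) * (-b * (2 * x))) x := by
      have : HasDerivAt (fun x : ℝ => -b * x ^ 2) (-b * (2 * x)) x := by
        simpa using (hasDerivAt_pow 2 x).const_mul (-b)
      exact (Real.hasDerivAt_exp _).comp x this
    have := h1.mul h2
    refine this.congr_deriv ?_
    field_simp
    ring
  have f'int : IntegrableOn (fun x => x ^ 2 * Real.exp (-b * x ^ 2)
      - (1/(2*b)) * Real.exp (-b * x ^ 2)) (Ioi (0:ℝ)) := by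
    apply (integrableOn_pow_mul_exp_neg_mul_sq hb 2).sub
    exact ((integrable_exp_neg_mul_sq hb).restrict.const_mul _)
  have htop : Tendsto (fun x : ℝ => (-(1/(2*b)) * x) * Real.exp (-b * x ^ 2))
      atTop (nhds 0) := by
    have := (tendsto_pow_mul_exp_neg_mul_sq hb 1).const_mul (-(1/(2*b)))
    simpa [mul_assoc, mul_comm, mul_left_comm] using this
  have key := integral_Ioi_of_hasDerivAt_of_tendsto' hderiv f'int htop
  have hsplit : (∫ x in Ioi (0:ℝ), (x ^ 2 * Real.exp (-b * x ^ 2)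
      - (1/(2*b)) * Real.exp (-b * x ^ 2)))
      = (∫ x in Ioi (0:ℝ), x ^ 2 * Real.exp (-b * x ^ 2))
        - (1/(2*b)) * ∫ x in Ioi (0:ℝ), Real.exp (-b * x ^ 2) := by
    rw [integral_sub (integrableOn_pow_mul_exp_neg_mul_sq hb 2)
      ((integrable_exp_neg_mul_sq hb).restrict.const_mul _), MeasureTheory.integral_const_mul]
  rw [hsplit, integral_gaussian_Ioi] at key
  simp only [mul_zero, zero_mul, sub_zero] at key
  have : (∫ x in Ioi (0:ℝ), x ^ 2 * Real.exp (-b * x ^ 2))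
      = (1/(2*b)) * (Real.sqrt (π / b) / 2) := by linarith
  rw [this]; ring

lemma moment3 {b : ℝ} (hb : 0 < b) :
    (∫ x in Ioi (0:ℝ), x ^ 3 * Real.exp (-b * x ^ 2)) = 1 / (2 * b ^ 2) := by
  have hderiv : ∀ x ∈ Ici (0:ℝ), HasDerivAt
      (fun x : ℝ => (-(x ^ 2/(2*b)) - 1/(2*b^2)) * Real.exp (-b * x ^ 2))
      (x ^ 3 * Real.exp (-b * x ^ 2)) x := by
    intro x _
    have h1 : HasDerivAt (fun x : ℝ => (-(x ^ 2/(2*b)) - 1/(2*b^2))) (-(2*x/(2*b))) x := by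
      have := ((hasDerivAt_pow 2 x).div_const (2*b)).neg.sub_const (1/(2*b^2))
      simpa using this
    have h2 : HasDerivAt (fun x : ℝ => Real.exp (-b * x ^ 2))
        (Real.exp (-b * x ^ 2) * (-b * (2 * x))) x := by
      have : HasDerivAt (fun x : ℝ => -b * x ^ 2) (-b * (2 * x)) x := by
        simpa using (hasDerivAt_pow 2 x).const_mul (-b)
      exact (Real.hasDerivAt_exp _).comp x this
    have := h1.mul h2
    refine this.congr_deriv ?_
    field_simp
    ring
  have f'int := integrableOn_pow_mul_exp_neg_mul_sq hb 3
  have htop : Tendsto (fun x : ℝ => (-(x ^ 2/(2*b)) - 1/(2*b^2)) * Real.exp (-b * x ^ 2))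
      atTop (nhds 0) := by
    have h2 := (tendsto_pow_mul_exp_neg_mul_sq hb 2).const_mul (-(1/(2*b)))
    have h0 := (tendsto_pow_mul_exp_neg_mul_sq hb 0).const_mul (-(1/(2*b^2)))
    have := h2.add h0
    simp only [mul_zero, add_zero] at this
    apply this.congr
    intro x; simp [pow_zero]; ring
  have key := integral_Ioi_of_hasDerivAt_of_tendsto' hderiv f'int htop
  rw [key]
  norm_num

noncomputable def G (V k : ℝ) : ℝ :=
  ∫ z in Ioi (0:ℝ), z ^ 2 * Real.exp (-(1/(2*V)) * z ^ 2) * Q (k * z)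

lemma G_integrand_int {V : ℝ} (hV : 0 < V) (k : ℝ) :
    IntegrableOn (fun z : ℝ => z ^ 2 * Real.exp (-(1/(2*V)) * z ^ 2) * Q (k * z))
      (Ioi 0) := by
  have hb : (0:ℝ) < 1/(2*V) := by positivity
  apply Integrable.mono' ((integrableOn_pow_mul_exp_neg_mul_sq hb 2).const_mul (Real.sqrt (2*π)))
  · exact (Continuous.aestronglyMeasurable (by
      have := Q_cont; fun_prop))
  · filter_upwards with z
    rw [Real.norm_eq_abs, abs_mul, abs_of_nonneg (Q_nonneg _), abs_mul,
      abs_of_nonneg (sq_nonneg z), abs_of_nonneg (Real.exp_pos _).le]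
    calc z ^ 2 * Real.exp (-(1/(2*V)) * z ^ 2) * Q (k * z)
        ≤ z ^ 2 * Real.exp (-(1/(2*V)) * z ^ 2) * Real.sqrt (2*π) := by
          apply mul_le_mul_of_nonneg_left (Q_le _) (by positivity)
      _ = Real.sqrt (2*π) * (z ^ 2 * Real.exp (-(1/(2*V)) * z ^ 2)) := by ring

lemma hasDerivAt_G {V : ℝ} (hV : 0 < V) (k : ℝ) :
    HasDerivAt (G V) (2 * V ^ 2 / (1 + V * k ^ 2) ^ 2) k := by
  have hb : (0:ℝ) < 1/(2*V) := by positivity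
  set F' : ℝ → ℝ → ℝ := fun k z => z ^ 2 * Real.exp (-(1/(2*V)) * z ^ 2) * (z * gk (k * z))
    with hF'
  have main := hasDerivAt_integral_of_dominated_loc_of_deriv_le
    (F := fun k z => z ^ 2 * Real.exp (-(1/(2*V)) * z ^ 2) * Q (k * z))
    (F' := F') (x₀ := k) (s := Metric.ball k 1) (μ := volume.restrict (Ioi 0))
    (bound := fun z => z ^ 3 * Real.exp (-(1/(2*V)) * z ^ 2))
    (Metric.ball_mem_nhds k one_pos)
    (by filter_upwards with k'
        exact (Continuous.aestronglyMeasurable (by have := Q_cont; fun_prop)))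
    (G_integrand_int hV k)
    (Continuous.aestronglyMeasurable (by have := gk_cont; fun_prop))
    (by rw [ae_restrict_iff' measurableSet_Ioi]
        filter_upwards with z hz k' _
        have hz0 : 0 < z := hz
        rw [hF']
        simp only
        rw [Real.norm_eq_abs, abs_mul, abs_mul, abs_of_nonneg (sq_nonneg z), abs_mul,
          abs_of_nonneg (Real.exp_pos _).le, abs_of_nonneg hz0.le,
          abs_of_nonneg (by unfold gk; positivity : (0:ℝ) ≤ gk (k' * z))]
        have hgk : gk (k' * z) ≤ 1 := by
          unfold gk
          apply Real.exp_le_one_iff.mpr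
          nlinarith [sq_nonneg (k' * z)]
        calc z ^ 2 * Real.exp (-(1/(2*V)) * z ^ 2) * (z * gk (k' * z))
            ≤ z ^ 2 * Real.exp (-(1/(2*V)) * z ^ 2) * (z * 1) := by
              apply mul_le_mul_of_nonneg_left _ (by positivity)
              exact mul_le_mul_of_nonneg_left hgk hz0.le
          _ = z ^ 3 * Real.exp (-(1/(2*V)) * z ^ 2) := by ring)
    (integrableOn_pow_mul_exp_neg_mul_sq hb 3)
    (by filter_upwards with z k' _
        have h1 : HasDerivAt (fun k : ℝ => Q (k * z)) (gk (k' * z) * z) k' :=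
          by have := (hasDerivAt_Q (k' * z)).comp k' (hasDerivAt_mul_const z); exact this
        have := h1.const_mul (z ^ 2 * Real.exp (-(1/(2*V)) * z ^ 2))
        rw [hF']
        simp only
        refine this.congr_deriv ?_
        ring)
  have hval : (∫ z in Ioi (0:ℝ), F' k z) = 2 * V ^ 2 / (1 + V * k ^ 2) ^ 2 := by
    have hβ : (0:ℝ) < 1/(2*V) + k ^ 2 / 2 := by positivity
    have : (∫ z in Ioi (0:ℝ), F' k z)
        = ∫ z in Ioi (0:ℝ), z ^ 3 * Real.exp (-(1/(2*V) + k ^ 2/2) * z ^ 2) := by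
      apply setIntegral_congr_fun measurableSet_Ioi
      intro z _
      rw [hF']
      simp only [gk]
      have he : Real.exp (-(1/(2*V) + k ^ 2/2) * z ^ 2)
          = Real.exp (-(1/(2*V)) * z ^ 2) * Real.exp (-(k*z) ^ 2 / 2) := by
        rw [← Real.exp_add]; ring_nf
      rw [he]; ring
    rw [this, moment3 hβ]
    have h1 : 1/(2*V) + k ^ 2 / 2 = (1 + V * k ^ 2) / (2 * V) := by field_simp
    rw [h1]
    have h2 : (0:ℝ) < 1 + V * k ^ 2 := by positivity
    field_simp
  rw [← hval]
  exact main.2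

lemma G_eq {V : ℝ} (hV : 0 < V) (k : ℝ) :
    G V k = Real.sqrt V * V * (π/2 + Real.arctan (k * Real.sqrt V))
      + V ^ 2 * k / (1 + V * k ^ 2) := by
  set r : ℝ → ℝ := fun k => Real.sqrt V * V * (π/2 + Real.arctan (k * Real.sqrt V))
      + V ^ 2 * k / (1 + V * k ^ 2) with hr
  have hVs : Real.sqrt V ^ 2 = V := Real.sq_sqrt hV.le
  have hrd : ∀ k, HasDerivAt r (2 * V ^ 2 / (1 + V * k ^ 2) ^ 2) k := by
    intro k
    have h1 : HasDerivAt (fun k : ℝ => Real.arctan (k * Real.sqrt V))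
        (1/(1 + (k * Real.sqrt V) ^ 2) * Real.sqrt V) k :=
      by have := (Real.hasDerivAt_arctan (k * Real.sqrt V)).comp k (hasDerivAt_mul_const (Real.sqrt V)); exact this
    have h2 : HasDerivAt (fun k : ℝ => 1 + V * k ^ 2) (V * (2 * k)) k := by
      simpa using ((hasDerivAt_pow 2 k).const_mul V).const_add 1
    have h3 : HasDerivAt (fun k : ℝ => V ^ 2 * k) (V ^ 2) k := by
      simpa using (hasDerivAt_id k).const_mul (V ^ 2)
    have hden : (1 + V * k ^ 2) ≠ 0 := by positivity
    have h4 := h3.div h2 hden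
    have h5 := ((h1.const_add (π/2)).const_mul (Real.sqrt V * V)).add h4
    refine h5.congr_deriv ?_
    rw [mul_pow, hVs]
    field_simp
    ring_nf
    rw [hVs]
    ring
  have hGd := hasDerivAt_G hV
  have hdiff : Differentiable ℝ (fun k => G V k - r k) :=
    fun k => ((hGd k).sub (hrd k)).differentiableAt
  have hzero : ∀ k, deriv (fun k => G V k - r k) k = 0 := by
    intro k
    have := ((hGd k).sub (hrd k))
    simpa [Pi.sub_def] using this.deriv
  have hconst := is_const_of_deriv_eq_zero hdiff hzero k 0
  have hb : (0:ℝ) < 1/(2*V) := by positivity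
  have hQ0 : Q 0 = Real.sqrt (2*π) / 2 := by
    unfold Q
    rw [neg_zero]
    have : (∫ s in Ioi (0:ℝ), gk s) = ∫ s in Ioi (0:ℝ), Real.exp (-(1/2 : ℝ) * s ^ 2) :=
      setIntegral_congr_fun measurableSet_Ioi (fun s _ => gk_eq s)
    rw [this, integral_gaussian_Ioi, show π / (1/2 : ℝ) = 2 * π by ring]
  have hG0 : G V 0 = π * Real.sqrt V * V / 2 := by
    unfold G
    simp only [zero_mul, hQ0]
    rw [integral_mul_const, moment2 hb]
    rw [show π / (1/(2*V)) = 2 * π * V by field_simp]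
    rw [show (4 : ℝ) * (1/(2*V)) = 2 / V by field_simp; ring]
    have h2π : Real.sqrt (2*π) * Real.sqrt (2*π) = 2*π := Real.mul_self_sqrt (by positivity)
    rw [Real.sqrt_mul (by positivity : (0:ℝ) ≤ 2*π)]
    generalize Real.sqrt (2*π) = s at h2π ⊢
    field_simp
    linear_combination h2π
  have hr0 : r 0 = Real.sqrt V * V * (π/2) := by
    rw [hr]
    simp [Real.arctan_zero]
  have heq : G V k - r k = G V 0 - r 0 := hconst
  rw [hG0, hr0, show π * Real.sqrt V * V / 2 = Real.sqrt V * V * (π/2) from by ring,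
    sub_self, sub_eq_zero] at heq
  rw [heq]

lemma shift (f : ℝ → ℝ) (m : ℝ) :
    (∫ x in Ioi (0:ℝ), f (x - m)) = ∫ y in Ioi (-m), f y := by
  rw [← integral_indicator measurableSet_Ioi, ← integral_indicator measurableSet_Ioi,
    ← integral_sub_right_eq_self (fun x => (Ioi (-m)).indicator f x) m]
  congr 1
  ext x
  by_cases h : 0 < x
  · rw [indicator_of_mem (mem_Ioi.mpr h),
      indicator_of_mem (by simp only [mem_Ioi]; linarith : x - m ∈ Ioi (-m))]
  · rw [indicator_of_notMem (by simpa using h),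
      indicator_of_notMem (by simp only [mem_Ioi, not_lt]; linarith [le_of_not_gt h])]

theorem stmt_17 (I J : ℝ) (hI : 0 < I) (hJ : 0 < J) :
    (∫ z in Set.Ioi (0 : ℝ), z ^ 2 *
        ∫ x in Set.Ioi (0 : ℝ),
          (Real.exp (-x ^ 2 / (2 * I)) / Real.sqrt (2 * Real.pi * I)) *
            (Real.exp (-(z - x) ^ 2 / (2 * J)) / Real.sqrt (2 * Real.pi * J))) =
      (I + J) / 2 - (I + J) / (2 * Real.pi) * Real.arctan (Real.sqrt (J / I)) +
        Real.sqrt (I * J) / (2 * Real.pi) := by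
  set V := I + J with hVdef
  have hV : 0 < V := by positivity
  set σ := Real.sqrt (I*J/V) with hσdef
  have hσ : 0 < σ := Real.sqrt_pos.mpr (by positivity)
  have hσ2 : σ ^ 2 = I*J/V := Real.sq_sqrt (by positivity)
  set kk := (I/V)/σ with hkkdef
  have hkk : 0 < kk := by positivity
  -- the inner integral
  have inner : ∀ z : ℝ,
      (∫ x in Ioi (0:ℝ), Real.exp (-x^2/(2*I)) * Real.exp (-(z-x)^2/(2*J)))
        = σ * (Real.exp (-(1/(2*V)) * z^2) * Q (kk*z)) := by
    intro z
    have step1 : ∀ x ∈ Ioi (0:ℝ), Real.exp (-x^2/(2*I)) * Real.exp (-(z-x)^2/(2*J))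
        = Real.exp (-(1/(2*V)) * z^2) *
          (fun t => Real.exp (-(1/(2*σ^2)) * t^2)) (x - (I/V)*z) := by
      intro x _
      simp only
      rw [← Real.exp_add, ← Real.exp_add]
      congr 1
      rw [hσ2]
      field_simp
      ring
    rw [setIntegral_congr_fun measurableSet_Ioi step1, MeasureTheory.integral_const_mul,
      shift (fun t => Real.exp (-(1/(2*σ^2)) * t^2)) ((I/V)*z)]
    have step2 : ∀ y ∈ Ioi (-((I/V)*z)), Real.exp (-(1/(2*σ^2)) * y^2) = gk (σ⁻¹ * y) := by
      intro y _
      rw [gk_eq]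
      congr 1
      rw [mul_pow]
      rw [show (σ⁻¹)^2 = 1/σ^2 by field_simp]
      field_simp
    rw [setIntegral_congr_fun measurableSet_Ioi step2,
      integral_comp_mul_left_Ioi gk _ (inv_pos.mpr hσ), inv_inv, smul_eq_mul]
    rw [show σ⁻¹ * -((I/V)*z) = -(kk*z) by rw [hkkdef]; field_simp]
    ring_nf
    rfl
  -- sqrt facts
  have ha : Real.sqrt I ^ 2 = I := Real.sq_sqrt hI.le
  have hb : Real.sqrt J ^ 2 = J := Real.sq_sqrt hJ.le
  have hv : Real.sqrt V ^ 2 = V := Real.sq_sqrt hV.le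
  have ha0 : 0 < Real.sqrt I := Real.sqrt_pos.mpr hI
  have hb0 : 0 < Real.sqrt J := Real.sqrt_pos.mpr hJ
  have hv0 : 0 < Real.sqrt V := Real.sqrt_pos.mpr hV
  have hs : Real.sqrt (I*J) = Real.sqrt I * Real.sqrt J := Real.sqrt_mul hI.le J
  have hσab : σ = Real.sqrt I * Real.sqrt J / Real.sqrt V := by
    rw [hσdef, Real.sqrt_div (by positivity) V, hs]
  have hscaled : Real.sqrt (2*π*I) * Real.sqrt (2*π*J) = 2*π*Real.sqrt (I*J) := by
    rw [Real.sqrt_mul (by positivity : (0:ℝ) ≤ 2*π) I,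
      Real.sqrt_mul (by positivity : (0:ℝ) ≤ 2*π) J, hs]
    have h2π : Real.sqrt (2*π) ^ 2 = 2*π := Real.sq_sqrt (by positivity)
    linear_combination (Real.sqrt I * Real.sqrt J) * h2π
  have hkkv : kk * Real.sqrt V = Real.sqrt I / Real.sqrt J := by
    rw [hkkdef, hσab]
    field_simp
    linear_combination (I * Real.sqrt J + I - I * Real.sqrt J) * hv + (I * Real.sqrt J - I + Real.sqrt J * J - J - V * Real.sqrt J) * ha + (I - I * Real.sqrt J) * hVdef
  have hVkk2 : V * kk ^ 2 = I / J := by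
    have h0 : V * kk ^ 2 = (kk * Real.sqrt V) ^ 2 := by
      rw [mul_pow, hv]; ring
    rw [h0, hkkv, div_pow, ha, hb]
  -- rewrite outer integral
  have inner2 : ∀ z ∈ Ioi (0:ℝ), z ^ 2 * (∫ x in Ioi (0 : ℝ),
        (Real.exp (-x ^ 2 / (2 * I)) / Real.sqrt (2 * Real.pi * I)) *
          (Real.exp (-(z - x) ^ 2 / (2 * J)) / Real.sqrt (2 * Real.pi * J)))
      = (σ / (Real.sqrt (2*π*I) * Real.sqrt (2*π*J))) *
          (z ^ 2 * Real.exp (-(1/(2*V)) * z ^ 2) * Q (kk * z)) := by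
    intro z _
    have hpt : ∀ x ∈ Ioi (0:ℝ),
        (Real.exp (-x ^ 2 / (2 * I)) / Real.sqrt (2 * Real.pi * I)) *
          (Real.exp (-(z - x) ^ 2 / (2 * J)) / Real.sqrt (2 * Real.pi * J))
        = (1 / (Real.sqrt (2*π*I) * Real.sqrt (2*π*J))) *
          (Real.exp (-x^2/(2*I)) * Real.exp (-(z-x)^2/(2*J))) := by
      intro x _
      field_simp
    rw [setIntegral_congr_fun measurableSet_Ioi hpt, MeasureTheory.integral_const_mul, inner z]
    ring
  rw [setIntegral_congr_fun measurableSet_Ioi inner2, MeasureTheory.integral_const_mul]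
  have hG : (∫ z in Ioi (0:ℝ), z ^ 2 * Real.exp (-(1/(2*V)) * z ^ 2) * Q (kk * z)) = G V kk :=
    rfl
  rw [hG, G_eq hV kk, hkkv, hVkk2, hscaled]
  -- arctan identity
  have harct : Real.arctan (Real.sqrt (J/I)) = π/2 - Real.arctan (Real.sqrt I / Real.sqrt J) := by
    have h1 : Real.sqrt (J/I) = (Real.sqrt I / Real.sqrt J)⁻¹ := by
      rw [Real.sqrt_div hJ.le, inv_div]
    rw [h1, Real.arctan_inv_of_pos (by positivity)]
  rw [harct]
  -- final algebra
  have h1IJ : 1 + I/J = V/J := by rw [hVdef]; field_simp; ring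
  have hVkk : V * kk = Real.sqrt V * (Real.sqrt I / Real.sqrt J) := by
    rw [← hkkv]
    linear_combination (-kk) * hv
  have hterm2 : V ^ 2 * kk / (1 + I/J) = Real.sqrt (I*J) * Real.sqrt V := by
    rw [h1IJ]
    have h2 : V ^ 2 * kk / (V/J) = (V * kk) * J := by
      field_simp
    rw [h2, hVkk, hs]
    field_simp
    linear_combination (-1) * hb
  rw [hterm2, hσab, hs]
  have hπ : (0:ℝ) < π := Real.pi_pos
  field_simp
  ring
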